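/- Let N ∈ ℕ with N ≥ 1, let p00, p10, p01, p11 > 0 with p00 + p10 + p01 + p11 = 1, and let p(x, y) denote the joint probability mass function of the bivariate binomial distribution BVB with these parameters, with the convention p(x, y) = 0 if x < 0 or y < 0. Then for all integers x, y ≥ 0: p00 · x · p(x, y) = −p01 · x · p(x, y − 1) + p10 · (N − x + 1) · p(x − 1, y) + p11 · (N − x + 1) · p(x − 1, y − 1), and p00 · y · p(x, y) = −p10 · y · p(x − 1, y) + p01 · (N − y + 1) · p(x, y − 1) + p11 · (N − y + 1) · p(x − 1, y − 1). -/
import Mathlib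


open scoped NNReal ENNReal

/-- Expectation of a real-valued function under a distribution on `ℕ × ℕ`. -/
noncomputable def pExp (p : PMF (ℕ × ℕ)) (g : ℕ × ℕ → ℝ) : ℝ :=
  ∑' q : ℕ × ℕ, (p q).toReal * g q

/-- The distribution of the (componentwise) sum of `n` i.i.d. bivariate random
vectors, each with distribution `bern`.  For a bivariate Bernoulli `bern` with
probabilities `p00, p10, p01, p11`, `iidSum bern N` is the bivariate binomial
distribution `BVB(N; p00, p10, p01, p11)` of type I. -/
noncomputable def iidSum (bern : PMF (ℕ × ℕ)) : ℕ → PMF (ℕ × ℕ)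
  | 0 => PMF.pure (0, 0)
  | n + 1 => (iidSum bern n).bind fun a => bern.map fun b => (a.1 + b.1, a.2 + b.2)


noncomputable def Qf (bern : PMF (ℕ × ℕ)) (n : ℕ) (x y : ℤ) : ℝ :=
  if 0 ≤ x ∧ 0 ≤ y then (iidSum bern n (x.toNat, y.toNat)).toReal else 0

lemma Qf_neg_left {bern : PMF (ℕ × ℕ)} {n : ℕ} {x y : ℤ} (h : x < 0) :
    Qf bern n x y = 0 := if_neg (fun hc => absurd hc.1 (not_le.mpr h))

lemma Qf_neg_right {bern : PMF (ℕ × ℕ)} {n : ℕ} {x y : ℤ} (h : y < 0) :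
    Qf bern n x y = 0 := if_neg (fun hc => absurd hc.2 (not_le.mpr h))

lemma Qf_nat (bern : PMF (ℕ × ℕ)) (n : ℕ) (a b : ℕ) :
    Qf bern n (a : ℤ) (b : ℤ) = (iidSum bern n (a, b)).toReal := by
  simp [Qf]

lemma Qf_pred_left (bern : PMF (ℕ × ℕ)) (n : ℕ) (a b : ℕ) :
    Qf bern n ((a : ℤ) - 1) (b : ℤ)
      = if a = 0 then 0 else (iidSum bern n (a - 1, b)).toReal := by
  rcases a with _ | k
  · rw [if_pos rfl, Qf_neg_left (by norm_num)]
  · rw [if_neg (Nat.succ_ne_zero k), show ((k + 1 : ℕ) : ℤ) - 1 = (k : ℤ) by push_cast; ring,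
      Qf_nat, Nat.add_sub_cancel]

lemma Qf_pred_right (bern : PMF (ℕ × ℕ)) (n : ℕ) (a b : ℕ) :
    Qf bern n (a : ℤ) ((b : ℤ) - 1)
      = if b = 0 then 0 else (iidSum bern n (a, b - 1)).toReal := by
  rcases b with _ | l
  · rw [if_pos rfl, Qf_neg_right (by norm_num)]
  · rw [if_neg (Nat.succ_ne_zero l), show ((l + 1 : ℕ) : ℤ) - 1 = (l : ℤ) by push_cast; ring,
      Qf_nat, Nat.add_sub_cancel]

lemma Qf_pred_both (bern : PMF (ℕ × ℕ)) (n : ℕ) (a b : ℕ) :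
    Qf bern n ((a : ℤ) - 1) ((b : ℤ) - 1)
      = if a = 0 ∨ b = 0 then 0 else (iidSum bern n (a - 1, b - 1)).toReal := by
  rcases a with _ | k
  · rw [if_pos (Or.inl rfl), Qf_neg_left (by norm_num)]
  · rcases b with _ | l
    · rw [if_pos (Or.inr rfl), Qf_neg_right (by norm_num)]
    · rw [if_neg (by simp), show ((k + 1 : ℕ) : ℤ) - 1 = (k : ℤ) by push_cast; ring,
        show ((l + 1 : ℕ) : ℤ) - 1 = (l : ℤ) by push_cast; ring, Qf_nat,
        Nat.add_sub_cancel, Nat.add_sub_cancel]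

lemma Qf_zero (bern : PMF (ℕ × ℕ)) (x y : ℤ) :
    Qf bern 0 x y = if x = 0 ∧ y = 0 then 1 else 0 := by
  by_cases h : x = 0 ∧ y = 0
  · rw [if_pos h, h.1, h.2]
    simp [Qf, iidSum, PMF.pure_apply]
  · rw [if_neg h]
    by_cases h2 : 0 ≤ x ∧ 0 ≤ y
    · rw [Qf, if_pos h2]
      have hne : (x.toNat, y.toNat) ≠ ((0 : ℕ), (0 : ℕ)) := by
        simp only [ne_eq, Prod.mk.injEq, not_and]
        intro h1 h2'
        exact h ⟨by omega, by omega⟩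
      rw [show iidSum bern 0 = PMF.pure (0, 0) from rfl, PMF.pure_apply, if_neg hne]
      simp
    · rw [Qf, if_neg h2]

lemma bern_support {bern : PMF (ℕ × ℕ)} {p00 p10 p01 p11 : ℝ≥0}
    (hsum : p00 + p10 + p01 + p11 = 1)
    (hb00 : bern (0, 0) = (p00 : ℝ≥0∞)) (hb10 : bern (1, 0) = (p10 : ℝ≥0∞))
    (hb01 : bern (0, 1) = (p01 : ℝ≥0∞)) (hb11 : bern (1, 1) = (p11 : ℝ≥0∞))
    (d : ℕ × ℕ)
    (h : d ∉ ({(0,0),(1,0),(0,1),(1,1)} : Finset (ℕ × ℕ))) : bern d = 0 := by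
  have hs : ∑ q ∈ ({(0,0),(1,0),(0,1),(1,1)} : Finset (ℕ × ℕ)), bern q = 1 := by
    rw [Finset.sum_insert (by decide), Finset.sum_insert (by decide),
      Finset.sum_insert (by decide), Finset.sum_singleton, hb00, hb10, hb01, hb11]
    rw [← ENNReal.coe_add, ← ENNReal.coe_add, ← ENNReal.coe_add]
    rw [show p00 + (p10 + (p01 + p11)) = p00 + p10 + p01 + p11 by ring, hsum, ENNReal.coe_one]
  have hle : bern d + 1 ≤ 1 := by
    calc bern d + 1 = ∑ q ∈ insert d ({(0,0),(1,0),(0,1),(1,1)} : Finset (ℕ × ℕ)), bern q := by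
          rw [Finset.sum_insert h, hs]
      _ ≤ ∑' q, bern q := ENNReal.sum_le_tsum _
      _ = 1 := bern.tsum_coe
  have h2 : bern d + 1 ≤ 0 + 1 := by simpa using hle
  simpa using (ENNReal.add_le_add_iff_right (by norm_num)).mp h2

lemma iid_step {bern : PMF (ℕ × ℕ)} {p00 p10 p01 p11 : ℝ≥0}
    (hsum : p00 + p10 + p01 + p11 = 1)
    (hb00 : bern (0, 0) = (p00 : ℝ≥0∞)) (hb10 : bern (1, 0) = (p10 : ℝ≥0∞))
    (hb01 : bern (0, 1) = (p01 : ℝ≥0∞)) (hb11 : bern (1, 1) = (p11 : ℝ≥0∞))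
    (n a b : ℕ) :
    iidSum bern (n + 1) (a, b)
      = iidSum bern n (a, b) * bern (0, 0)
        + (if a = 0 then 0 else iidSum bern n (a - 1, b) * bern (1, 0))
        + (if b = 0 then 0 else iidSum bern n (a, b - 1) * bern (0, 1))
        + (if a = 0 ∨ b = 0 then 0 else iidSum bern n (a - 1, b - 1) * bern (1, 1)) := by
  have hmap : ∀ c : ℕ × ℕ, (bern.map fun d => (c.1 + d.1, c.2 + d.2)) (a, b)
      = (if (a, b) = (c.1, c.2) then bern (0, 0) else 0)
        + ((if (a, b) = (c.1 + 1, c.2) then bern (1, 0) else 0)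
        + ((if (a, b) = (c.1, c.2 + 1) then bern (0, 1) else 0)
        + (if (a, b) = (c.1 + 1, c.2 + 1) then bern (1, 1) else 0))) := by
    intro c
    rw [PMF.map_apply]
    rw [tsum_eq_sum (s := ({(0,0),(1,0),(0,1),(1,1)} : Finset (ℕ × ℕ)))
      (fun d hd => by rw [bern_support hsum hb00 hb10 hb01 hb11 d hd]; simp)]
    rw [Finset.sum_insert (by decide), Finset.sum_insert (by decide),
      Finset.sum_insert (by decide), Finset.sum_singleton]
    simp only [add_zero]
    congr
  have hfun : (fun c : ℕ × ℕ => iidSum bern n c * ((bern.map fun d => (c.1 + d.1, c.2 + d.2)) (a, b)))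
      = fun c : ℕ × ℕ =>
        (iidSum bern n c * (if (a, b) = (c.1, c.2) then bern (0, 0) else 0))
        + ((iidSum bern n c * (if (a, b) = (c.1 + 1, c.2) then bern (1, 0) else 0))
        + ((iidSum bern n c * (if (a, b) = (c.1, c.2 + 1) then bern (0, 1) else 0))
        + (iidSum bern n c * (if (a, b) = (c.1 + 1, c.2 + 1) then bern (1, 1) else 0)))) := by
    funext c; rw [hmap c]; ring
  have e1 : ∑' c : ℕ × ℕ, iidSum bern n c * (if (a, b) = (c.1, c.2) then bern (0, 0) else 0)
      = iidSum bern n (a, b) * bern (0, 0) := by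
    rw [tsum_eq_single (a, b)]
    · simp
    · rintro ⟨c1, c2⟩ hc
      rw [if_neg, mul_zero]
      intro h
      simp only [Prod.mk.injEq] at h
      simp only [ne_eq, Prod.mk.injEq, not_and] at hc
      omega
  have e2 : ∑' c : ℕ × ℕ, iidSum bern n c * (if (a, b) = (c.1 + 1, c.2) then bern (1, 0) else 0)
      = if a = 0 then 0 else iidSum bern n (a - 1, b) * bern (1, 0) := by
    rcases a with _ | k
    · rw [if_pos rfl]
      refine ENNReal.tsum_eq_zero.mpr ?_
      rintro ⟨c1, c2⟩
      rw [if_neg, mul_zero]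
      intro h; simp only [Prod.mk.injEq] at h; omega
    · rw [if_neg (Nat.succ_ne_zero k)]
      rw [tsum_eq_single (k, b)]
      · simp
      · rintro ⟨c1, c2⟩ hc
        rw [if_neg, mul_zero]
        intro h
        simp only [Prod.mk.injEq] at h
        simp only [ne_eq, Prod.mk.injEq, not_and] at hc
        omega
  have e3 : ∑' c : ℕ × ℕ, iidSum bern n c * (if (a, b) = (c.1, c.2 + 1) then bern (0, 1) else 0)
      = if b = 0 then 0 else iidSum bern n (a, b - 1) * bern (0, 1) := by
    rcases b with _ | l
    · rw [if_pos rfl]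
      refine ENNReal.tsum_eq_zero.mpr ?_
      rintro ⟨c1, c2⟩
      rw [if_neg, mul_zero]
      intro h; simp only [Prod.mk.injEq] at h; omega
    · rw [if_neg (Nat.succ_ne_zero l)]
      rw [tsum_eq_single (a, l)]
      · simp
      · rintro ⟨c1, c2⟩ hc
        rw [if_neg, mul_zero]
        intro h
        simp only [Prod.mk.injEq] at h
        simp only [ne_eq, Prod.mk.injEq, not_and] at hc
        omega
  have e4 : ∑' c : ℕ × ℕ, iidSum bern n c * (if (a, b) = (c.1 + 1, c.2 + 1) then bern (1, 1) else 0)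
      = if a = 0 ∨ b = 0 then 0 else iidSum bern n (a - 1, b - 1) * bern (1, 1) := by
    rcases a with _ | k
    · rw [if_pos (Or.inl rfl)]
      refine ENNReal.tsum_eq_zero.mpr ?_
      rintro ⟨c1, c2⟩
      rw [if_neg, mul_zero]
      intro h; simp only [Prod.mk.injEq] at h; omega
    · rcases b with _ | l
      · rw [if_pos (Or.inr rfl)]
        refine ENNReal.tsum_eq_zero.mpr ?_
        rintro ⟨c1, c2⟩
        rw [if_neg, mul_zero]
        intro h; simp only [Prod.mk.injEq] at h; omega
      · rw [if_neg (by simp)]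
        rw [tsum_eq_single (k, l)]
        · simp
        · rintro ⟨c1, c2⟩ hc
          rw [if_neg, mul_zero]
          intro h
          simp only [Prod.mk.injEq] at h
          simp only [ne_eq, Prod.mk.injEq, not_and] at hc
          omega
  show ((iidSum bern n).bind fun a' => bern.map fun b' => (a'.1 + b'.1, a'.2 + b'.2)) (a, b) = _
  rw [PMF.bind_apply]
  rw [show (fun c : ℕ × ℕ => iidSum bern n c * ((bern.map fun d => (c.1 + d.1, c.2 + d.2)) (a, b))) = _ from hfun]
  rw [ENNReal.tsum_add, ENNReal.tsum_add, ENNReal.tsum_add, e1, e2, e3, e4]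
  ring

lemma step_real {bern : PMF (ℕ × ℕ)} {p00 p10 p01 p11 : ℝ≥0}
    (hsum : p00 + p10 + p01 + p11 = 1)
    (hb00 : bern (0, 0) = (p00 : ℝ≥0∞)) (hb10 : bern (1, 0) = (p10 : ℝ≥0∞))
    (hb01 : bern (0, 1) = (p01 : ℝ≥0∞)) (hb11 : bern (1, 1) = (p11 : ℝ≥0∞))
    (n a b : ℕ) :
    (iidSum bern (n + 1) (a, b)).toReal
      = (iidSum bern n (a, b)).toReal * p00
        + (if a = 0 then 0 else (iidSum bern n (a - 1, b)).toReal * p10)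
        + (if b = 0 then 0 else (iidSum bern n (a, b - 1)).toReal * p01)
        + (if a = 0 ∨ b = 0 then 0 else (iidSum bern n (a - 1, b - 1)).toReal * p11) := by
  rw [iid_step hsum hb00 hb10 hb01 hb11, hb00, hb10, hb01, hb11]
  have h0 : iidSum bern n (a, b) * (p00 : ℝ≥0∞) ≠ ⊤ :=
    ENNReal.mul_ne_top (PMF.apply_ne_top _ _) ENNReal.coe_ne_top
  have h1 : (if a = 0 then 0 else iidSum bern n (a - 1, b) * (p10 : ℝ≥0∞)) ≠ ⊤ := by
    split_ifs
    · simp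
    · exact ENNReal.mul_ne_top (PMF.apply_ne_top _ _) ENNReal.coe_ne_top
  have h2 : (if b = 0 then 0 else iidSum bern n (a, b - 1) * (p01 : ℝ≥0∞)) ≠ ⊤ := by
    split_ifs
    · simp
    · exact ENNReal.mul_ne_top (PMF.apply_ne_top _ _) ENNReal.coe_ne_top
  have h3 : (if a = 0 ∨ b = 0 then 0 else iidSum bern n (a - 1, b - 1) * (p11 : ℝ≥0∞)) ≠ ⊤ := by
    split_ifs
    · simp
    · exact ENNReal.mul_ne_top (PMF.apply_ne_top _ _) ENNReal.coe_ne_top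
  rw [ENNReal.toReal_add (ENNReal.add_ne_top.mpr ⟨ENNReal.add_ne_top.mpr ⟨h0, h1⟩, h2⟩) h3,
    ENNReal.toReal_add (ENNReal.add_ne_top.mpr ⟨h0, h1⟩) h2, ENNReal.toReal_add h0 h1]
  simp only [apply_ite ENNReal.toReal, ENNReal.toReal_mul, ENNReal.coe_toReal,
    ENNReal.toReal_zero]

lemma Qf_rec {bern : PMF (ℕ × ℕ)} {p00 p10 p01 p11 : ℝ≥0}
    (hsum : p00 + p10 + p01 + p11 = 1)
    (hb00 : bern (0, 0) = (p00 : ℝ≥0∞)) (hb10 : bern (1, 0) = (p10 : ℝ≥0∞))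
    (hb01 : bern (0, 1) = (p01 : ℝ≥0∞)) (hb11 : bern (1, 1) = (p11 : ℝ≥0∞))
    (n : ℕ) (x y : ℤ) :
    Qf bern (n + 1) x y
      = (p00 : ℝ) * Qf bern n x y + (p10 : ℝ) * Qf bern n (x - 1) y
        + (p01 : ℝ) * Qf bern n x (y - 1) + (p11 : ℝ) * Qf bern n (x - 1) (y - 1) := by
  rcases lt_or_ge x 0 with hx | hx
  · have hx1 : x - 1 < 0 := by omega
    rw [Qf_neg_left hx, Qf_neg_left hx, Qf_neg_left hx1, Qf_neg_left hx, Qf_neg_left hx1]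
    ring
  · rcases lt_or_ge y 0 with hy | hy
    · have hy1 : y - 1 < 0 := by omega
      rw [Qf_neg_right hy, Qf_neg_right hy, Qf_neg_right hy, Qf_neg_right hy1,
        Qf_neg_right hy1]
      ring
    · lift x to ℕ using hx with a
      lift y to ℕ using hy with b
      rw [Qf_nat, Qf_nat, Qf_pred_left, Qf_pred_right, Qf_pred_both,
        step_real hsum hb00 hb10 hb01 hb11]
      split_ifs <;> ring

lemma Qf0_mul_left (bern : PMF (ℕ × ℕ)) (x y : ℤ) : (x : ℝ) * Qf bern 0 x y = 0 := by
  rw [Qf_zero]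
  split_ifs with h
  · rw [h.1]; simp
  · ring

lemma Qf0_mul_left' (bern : PMF (ℕ × ℕ)) (x y : ℤ) :
    (x : ℝ) * Qf bern 0 (x - 1) y = Qf bern 0 (x - 1) y := by
  rw [Qf_zero]
  split_ifs with h
  · have : x = 1 := by omega
    rw [this]; norm_num
  · ring

lemma Qf0_mul_right (bern : PMF (ℕ × ℕ)) (x y : ℤ) : (y : ℝ) * Qf bern 0 x y = 0 := by
  rw [Qf_zero]
  split_ifs with h
  · rw [h.2]; simp
  · ring

lemma Qf0_mul_right' (bern : PMF (ℕ × ℕ)) (x y : ℤ) :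
    (y : ℝ) * Qf bern 0 x (y - 1) = Qf bern 0 x (y - 1) := by
  rw [Qf_zero]
  split_ifs with h
  · have : y = 1 := by omega
    rw [this]; norm_num
  · ring

lemma Qf_S1 {bern : PMF (ℕ × ℕ)} {p00 p10 p01 p11 : ℝ≥0}
    (hsum : p00 + p10 + p01 + p11 = 1)
    (hb00 : bern (0, 0) = (p00 : ℝ≥0∞)) (hb10 : bern (1, 0) = (p10 : ℝ≥0∞))
    (hb01 : bern (0, 1) = (p01 : ℝ≥0∞)) (hb11 : bern (1, 1) = (p11 : ℝ≥0∞)) :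
    ∀ (n : ℕ) (x y : ℤ), (x : ℝ) * Qf bern (n + 1) x y
      = ((n : ℝ) + 1) * ((p10 : ℝ) * Qf bern n (x - 1) y
          + (p11 : ℝ) * Qf bern n (x - 1) (y - 1)) := by
  intro n
  induction n with
  | zero =>
    intro x y
    have hrec := Qf_rec hsum hb00 hb10 hb01 hb11 0 x y
    have k1 := Qf0_mul_left bern x y
    have k2 := Qf0_mul_left' bern x y
    have k3 := Qf0_mul_left bern x (y - 1)
    have k4 := Qf0_mul_left' bern x (y - 1)
    push_cast
    linear_combination (x : ℝ) * hrec + (p00 : ℝ) * k1 + (p10 : ℝ) * k2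
      + (p01 : ℝ) * k3 + (p11 : ℝ) * k4
  | succ n ih =>
    intro x y
    have hrec := Qf_rec hsum hb00 hb10 hb01 hb11 (n + 1) x y
    have ihA := ih x y
    have ihC := ih x (y - 1)
    have ihB := ih (x - 1) y
    have ihD := ih (x - 1) (y - 1)
    have hrecB := Qf_rec hsum hb00 hb10 hb01 hb11 n (x - 1) y
    have hrecD := Qf_rec hsum hb00 hb10 hb01 hb11 n (x - 1) (y - 1)
    push_cast at ihA ihC ihB ihD ⊢
    linear_combination (x : ℝ) * hrec + (p00 : ℝ) * ihA + (p01 : ℝ) * ihC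
      + (p10 : ℝ) * ihB + (p11 : ℝ) * ihD
      - ((n : ℝ) + 1) * (p10 : ℝ) * hrecB - ((n : ℝ) + 1) * (p11 : ℝ) * hrecD

lemma Qf_S2 {bern : PMF (ℕ × ℕ)} {p00 p10 p01 p11 : ℝ≥0}
    (hsum : p00 + p10 + p01 + p11 = 1)
    (hb00 : bern (0, 0) = (p00 : ℝ≥0∞)) (hb10 : bern (1, 0) = (p10 : ℝ≥0∞))
    (hb01 : bern (0, 1) = (p01 : ℝ≥0∞)) (hb11 : bern (1, 1) = (p11 : ℝ≥0∞)) :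
    ∀ (n : ℕ) (x y : ℤ), (y : ℝ) * Qf bern (n + 1) x y
      = ((n : ℝ) + 1) * ((p01 : ℝ) * Qf bern n x (y - 1)
          + (p11 : ℝ) * Qf bern n (x - 1) (y - 1)) := by
  intro n
  induction n with
  | zero =>
    intro x y
    have hrec := Qf_rec hsum hb00 hb10 hb01 hb11 0 x y
    have k1 := Qf0_mul_right bern x y
    have k2 := Qf0_mul_right' bern x y
    have k3 := Qf0_mul_right bern (x - 1) y
    have k4 := Qf0_mul_right' bern (x - 1) y
    push_cast
    linear_combination (y : ℝ) * hrec + (p00 : ℝ) * k1 + (p01 : ℝ) * k2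
      + (p10 : ℝ) * k3 + (p11 : ℝ) * k4
  | succ n ih =>
    intro x y
    have hrec := Qf_rec hsum hb00 hb10 hb01 hb11 (n + 1) x y
    have ihA := ih x y
    have ihB := ih (x - 1) y
    have ihC := ih x (y - 1)
    have ihD := ih (x - 1) (y - 1)
    have hrecC := Qf_rec hsum hb00 hb10 hb01 hb11 n x (y - 1)
    have hrecD := Qf_rec hsum hb00 hb10 hb01 hb11 n (x - 1) (y - 1)
    push_cast at ihA ihC ihB ihD ⊢
    linear_combination (y : ℝ) * hrec + (p00 : ℝ) * ihA + (p10 : ℝ) * ihB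
      + (p01 : ℝ) * ihC + (p11 : ℝ) * ihD
      - ((n : ℝ) + 1) * (p01 : ℝ) * hrecC - ((n : ℝ) + 1) * (p11 : ℝ) * hrecD

theorem bvb_pmf_recursion (N : ℕ) (hN : 1 ≤ N) (p00 p10 p01 p11 : ℝ≥0)
    (h00 : 0 < p00) (h10 : 0 < p10) (h01 : 0 < p01) (h11 : 0 < p11)
    (hsum : p00 + p10 + p01 + p11 = 1)
    (bern : PMF (ℕ × ℕ))
    (hb00 : bern (0, 0) = (p00 : ℝ≥0∞)) (hb10 : bern (1, 0) = (p10 : ℝ≥0∞))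
    (hb01 : bern (0, 1) = (p01 : ℝ≥0∞)) (hb11 : bern (1, 1) = (p11 : ℝ≥0∞))
    (pz : ℤ → ℤ → ℝ)
    (hpz : ∀ x y : ℤ, pz x y =
      if 0 ≤ x ∧ 0 ≤ y then ((iidSum bern N) (x.toNat, y.toNat)).toReal else 0) :
    ∀ x y : ℕ,
      ((p00 : ℝ) * (x : ℝ) * pz (x : ℤ) (y : ℤ)
        = -(p01 : ℝ) * (x : ℝ) * pz (x : ℤ) ((y : ℤ) - 1)
          + (p10 : ℝ) * ((N : ℝ) - (x : ℝ) + 1) * pz ((x : ℤ) - 1) (y : ℤ)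
          + (p11 : ℝ) * ((N : ℝ) - (x : ℝ) + 1) * pz ((x : ℤ) - 1) ((y : ℤ) - 1))
      ∧ ((p00 : ℝ) * (y : ℝ) * pz (x : ℤ) (y : ℤ)
        = -(p10 : ℝ) * (y : ℝ) * pz ((x : ℤ) - 1) (y : ℤ)
          + (p01 : ℝ) * ((N : ℝ) - (y : ℝ) + 1) * pz (x : ℤ) ((y : ℤ) - 1)
          + (p11 : ℝ) * ((N : ℝ) - (y : ℝ) + 1) * pz ((x : ℤ) - 1) ((y : ℤ) - 1)) := by
  have hq : ∀ u v : ℤ, pz u v = Qf bern N u v := fun u v => (hpz u v).trans rfl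
  obtain ⟨M, rfl⟩ : ∃ M, N = M + 1 := ⟨N - 1, by omega⟩
  intro x y
  constructor
  · have hS := Qf_S1 hsum hb00 hb10 hb01 hb11 M (x : ℤ) (y : ℤ)
    have hS2 := Qf_S1 hsum hb00 hb10 hb01 hb11 M (x : ℤ) ((y : ℤ) - 1)
    have ihB := Qf_S1 hsum hb00 hb10 hb01 hb11 M ((x : ℤ) - 1) (y : ℤ)
    have ihD := Qf_S1 hsum hb00 hb10 hb01 hb11 M ((x : ℤ) - 1) ((y : ℤ) - 1)
    have hrecB := Qf_rec hsum hb00 hb10 hb01 hb11 M ((x : ℤ) - 1) (y : ℤ)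
    have hrecD := Qf_rec hsum hb00 hb10 hb01 hb11 M ((x : ℤ) - 1) ((y : ℤ) - 1)
    simp only [hq]
    push_cast at hS hS2 ihB ihD hrecB hrecD ⊢
    linear_combination (p00 : ℝ) * hS + (p01 : ℝ) * hS2
      - (p10 : ℝ) * (((M : ℝ) + 1) * hrecB - ihB)
      - (p11 : ℝ) * (((M : ℝ) + 1) * hrecD - ihD)
  · have hS := Qf_S2 hsum hb00 hb10 hb01 hb11 M (x : ℤ) (y : ℤ)
    have hS2x := Qf_S2 hsum hb00 hb10 hb01 hb11 M ((x : ℤ) - 1) (y : ℤ)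
    have ihC := Qf_S2 hsum hb00 hb10 hb01 hb11 M (x : ℤ) ((y : ℤ) - 1)
    have ihD := Qf_S2 hsum hb00 hb10 hb01 hb11 M ((x : ℤ) - 1) ((y : ℤ) - 1)
    have hrecC := Qf_rec hsum hb00 hb10 hb01 hb11 M (x : ℤ) ((y : ℤ) - 1)
    have hrecD := Qf_rec hsum hb00 hb10 hb01 hb11 M ((x : ℤ) - 1) ((y : ℤ) - 1)
    simp only [hq]
    push_cast at hS hS2x ihC ihD hrecC hrecD ⊢
    linear_combination (p00 : ℝ) * hS + (p10 : ℝ) * hS2x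
      - (p01 : ℝ) * (((M : ℝ) + 1) * hrecC - ihC)
      - (p11 : ℝ) * (((M : ℝ) + 1) * hrecD - ihD)
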